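/- arXiv:2103.12565 — 13 statements merged into one kernel-verified Lean document; each statement's English description precedes it below -/
import Mathlib

section
/- Let L be a finite lattice and let P be a proper subset of L that is woven in L. Then there exists an element p ∈ L ∖ P such that P ∪ {p} is again woven in L. (Indeed, any maximal element p of L ∖ P works.) -/
/-- A subset `P` of a lattice `L` is woven in `L` if for all `p, q ∈ P`,
at least one of `p ⊔ q` and `p ⊓ q` belongs to `P`. -/
def WovenIn {L : Type*} [Lattice L] (P : Set L) : Prop :=
  ∀ p ∈ P, ∀ q ∈ P, p ⊔ q ∈ P ∨ p ⊓ q ∈ P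

/-- If `L` is a finite lattice and `P ⊊ L` is woven in `L`, then there is
`p ∈ L ∖ P` such that `P ∪ {p}` is again woven in `L`. -/
theorem stmt_0 {L : Type*} [Lattice L] [Fintype L] (P : Set L)
    (hwoven : WovenIn P) (hproper : P ≠ Set.univ) :
    ∃ p : L, p ∉ P ∧ WovenIn (insert p P) := by
  have hne : Pᶜ.Nonempty := by
    rw [Set.nonempty_compl]; exact hproper
  obtain ⟨p, hp, hmax⟩ : ∃ a ∈ Pᶜ, ∀ a' ∈ Pᶜ, id a ≤ id a' → id a = id a' := by
    obtain ⟨a, ha, h⟩ := Set.Finite.exists_maximalFor id Pᶜ (Set.toFinite Pᶜ) hne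
    exact ⟨a, ha, fun b hb hab => le_antisymm hab (h hb hab)⟩
  refine ⟨p, hp, ?_⟩
  -- key: for any q, p ⊔ q ∈ insert p P
  have key : ∀ q : L, p ⊔ q ∈ insert p P := by
    intro q
    by_cases h : p ⊔ q ∈ P
    · exact Set.mem_insert_of_mem _ h
    · have := hmax (p ⊔ q) h le_sup_left
      simp only [id] at this; rw [← this]; exact Set.mem_insert _ _
  intro a ha b hb
  rcases ha with rfl | ha <;> rcases hb with rfl | hb
  · left; simp
  · left; exact key b
  · left; rw [sup_comm]; exact key a
  · rcases hwoven a ha b hb with h | h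
    · exact Or.inl (Set.mem_insert_of_mem _ h)
    · exact Or.inr (Set.mem_insert_of_mem _ h)
end

section
/- Let V be a finite set and let 𝒳 ⊊ 2^V be a woven family of subsets of V that is not all of 2^V. Then there exists a set X ⊆ V with X ∉ 𝒳 such that 𝒳 ∪ {X} is again woven. -/
/-- A family `𝒳` of subsets of `V` is woven if for all `X, Y ∈ 𝒳`,
at least one of `X ∪ Y` and `X ∩ Y` belongs to `𝒳`. -/
def WovenFamily {V : Type*} (𝒳 : Set (Set V)) : Prop :=
  ∀ X ∈ 𝒳, ∀ Y ∈ 𝒳, X ∪ Y ∈ 𝒳 ∨ X ∩ Y ∈ 𝒳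

/-- If `V` is a finite set and `𝒳 ⊊ 2^V` is woven, then there is a set
`X ⊆ V` with `X ∉ 𝒳` such that `𝒳 ∪ {X}` is again woven. -/
theorem stmt_1 {V : Type*} [Fintype V] (𝒳 : Set (Set V))
    (hwoven : WovenFamily 𝒳) (hproper : 𝒳 ≠ Set.univ) :
    ∃ X : Set V, X ∉ 𝒳 ∧ WovenFamily (insert X 𝒳) := by
  have hne : 𝒳ᶜ.Nonempty := Set.nonempty_compl.mpr hproper
  obtain ⟨X, hX, hmax⟩ :=
    Set.Finite.exists_maximalFor (id : Set V → Set V) 𝒳ᶜ (Set.toFinite _) hne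
  have hXn : X ∉ 𝒳 := hX
  have key : ∀ Y : Set V, X ∪ Y ∈ insert X 𝒳 := by
    intro Y
    by_cases h : X ∪ Y ∈ 𝒳
    · exact Set.mem_insert_of_mem _ h
    · have : id X = id (X ∪ Y) := Set.Subset.antisymm Set.subset_union_left (hmax h Set.subset_union_left)
      simp only [id] at this
      rw [← this]
      exact Set.mem_insert _ _
  refine ⟨X, hXn, ?_⟩
  intro A hA B hB
  rcases Set.mem_insert_iff.mp hA with rfl | hA'
  · exact Or.inl (key B)
  · rcases Set.mem_insert_iff.mp hB with rfl | hB'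
    · exact Or.inl (by rw [Set.union_comm]; exact key A)
    · exact (hwoven A hA' B hB').imp (Set.mem_insert_of_mem _) (Set.mem_insert_of_mem _)
end

section
/- Let L be a finite lattice, let f : L → ℝ be a submodular function, let k ∈ ℝ, and let P = {p ∈ L : f(p) < k}. Then P can be unravelled: there is a sequence P = P_n ⊇ P_{n−1} ⊇ ⋯ ⊇ P_0 = ∅ of subsets of L, each woven in L, such that |P_i ∖ P_{i−1}| = 1 for every 1 ≤ i ≤ n. -/
theorem take_closed {α β : Type*} [Preorder β] (key : α → β) (l : List α)
    (hs : l.Pairwise (fun a b => key a ≤ key b)) (hn : l.Nodup) (i : ℕ)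
    {p y : α} (hp : p ∈ l.take i) (hy : y ∈ l) (h : key y < key p ∨ y = p) : y ∈ l.take i := by
  rcases h with h | rfl
  · obtain ⟨a, ha, rfl⟩ := List.getElem_of_mem (List.mem_of_mem_take hp)
    obtain ⟨b, hb, rfl⟩ := List.getElem_of_mem hy
    have hai : a < i := by
      rcases List.mem_take_iff_getElem.mp hp with ⟨j, hj, hjeq⟩
      have hja : j = a := (List.Nodup.getElem_inj_iff hn (hi := by omega) (hj := ha)).mp hjeq
      omega
    have hba : b < a := by
      rcases Nat.lt_trichotomy a b with hlt | heq | hgt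
      · have h2 := List.pairwise_iff_getElem.mp hs a b ha hb hlt
        exact absurd h2 (not_le_of_gt h)
      · subst heq; exact absurd h (lt_irrefl _)
      · exact hgt
    exact List.mem_take_iff_getElem.mpr ⟨b, by omega, rfl⟩
  · exact hp

/-- If `L` is a finite lattice, `f : L → ℝ` is submodular, `k : ℝ`, and
`P = {p | f p < k}`, then `P` can be unravelled: there is a chain
`∅ = P₀ ⊆ P₁ ⊆ ⋯ ⊆ Pₙ = P` of sets woven in `L`, each step adding exactly
one element. -/
theorem stmt_2 {L : Type*} [Lattice L] [Fintype L] (f : L → ℝ)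
    (hf : ∀ p q : L, f (p ⊔ q) + f (p ⊓ q) ≤ f p + f q) (k : ℝ) :
    ∃ (n : ℕ) (c : ℕ → Set L),
      c 0 = ∅ ∧ c n = {p : L | f p < k} ∧
      (∀ i ≤ n, WovenIn (c i)) ∧
      (∀ i < n, c i ⊆ c (i + 1) ∧ (c (i + 1) \ c i).ncard = 1) := by
  classical
  set key : L → ℝ ×ₗ LinearExtension L := fun x => toLex (f x, toLinearExtension x) with hkey
  have hkeyinj : Function.Injective key := by
    intro a b h
    have h2 : toLinearExtension a = toLinearExtension b :=
      congrArg (fun z : ℝ ×ₗ LinearExtension L => (ofLex z).2) h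
    exact h2
  set r : L → L → Prop := fun a b => key a ≤ key b with hr
  haveI : DecidableRel r := Classical.decRel _
  haveI : IsTrans L r := ⟨fun a b c hab hbc => le_trans hab hbc⟩
  haveI : Std.Antisymm r := ⟨fun a b hab hba => hkeyinj (le_antisymm hab hba)⟩
  haveI : Std.Total r := ⟨fun a b => le_total (key a) (key b)⟩
  set l : List L := Finset.sort ({p : L | f p < k}.toFinset) r with hl
  have hsorted : l.Pairwise r := Finset.pairwise_sort _ r
  have hnodup : l.Nodup := Finset.sort_nodup _ r
  have hmem : ∀ x, x ∈ l ↔ f x < k := by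
    intro x; rw [hl, Finset.mem_sort, Set.mem_toFinset]; rfl
  refine ⟨l.length, fun i => {x | x ∈ l.take i}, ?_, ?_, ?_, ?_⟩
  · simp
  · ext x; simp [List.take_length, hmem x]
  · -- woven
    intro i _ p hp q hq
    have hpl : p ∈ l := List.mem_of_mem_take hp
    have hql : q ∈ l := List.mem_of_mem_take hq
    have hpk : f p < k := (hmem p).mp hpl
    have hqk : f q < k := (hmem q).mp hql
    -- z : the max
    obtain ⟨z, hz, hpz, hqz⟩ : ∃ z, z ∈ l.take i ∧ f p ≤ f z ∧ f q ≤ f z := by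
      rcases le_total (f p) (f q) with h | h
      · exact ⟨q, hq, h, le_refl _⟩
      · exact ⟨p, hp, le_refl _, h⟩
    have hzk : f z < k := (hmem z).mp (List.mem_of_mem_take hz)
    by_cases hm : f (p ⊓ q) < f z
    · refine Or.inr (take_closed key l hsorted hnodup i hz ((hmem _).mpr (lt_trans hm hzk)) ?_)
      left
      exact Prod.Lex.lt_iff.mpr (Or.inl hm)
    · by_cases hj : f (p ⊔ q) < f z
      · refine Or.inl (take_closed key l hsorted hnodup i hz ((hmem _).mpr (lt_trans hj hzk)) ?_)
        left
        exact Prod.Lex.lt_iff.mpr (Or.inl hj)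
      · push_neg at hm hj
        have hsub := hf p q
        have hfp : f p = f z := by linarith
        have hfm : f (p ⊓ q) = f p := by linarith
        have hle : key (p ⊓ q) ≤ key p :=
          Prod.Lex.le_iff.mpr (Or.inr ⟨hfm, toLinearExtension.monotone inf_le_left⟩)
        have hcond : key (p ⊓ q) < key p ∨ p ⊓ q = p := by
          rcases lt_or_eq_of_le hle with h | h
          · exact Or.inl h
          · exact Or.inr (hkeyinj h)
        refine Or.inr (take_closed key l hsorted hnodup i hp ((hmem _).mpr ?_) hcond)
        rw [hfm]; exact hpk
  · intro i hi
    constructor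
    · intro x hx
      rcases List.mem_take_iff_getElem.mp hx with ⟨j, hj, hjeq⟩
      exact List.mem_take_iff_getElem.mpr ⟨j, by omega, hjeq⟩
    · have hlen : i < l.length := hi
      have hdiff : {x | x ∈ l.take (i+1)} \ {x | x ∈ l.take i} = {l[i]} := by
        ext x
        simp only [Set.mem_diff, Set.mem_setOf_eq, Set.mem_singleton_iff]
        constructor
        · rintro ⟨h1, h2⟩
          rcases List.mem_take_iff_getElem.mp h1 with ⟨j, hj, hjeq⟩
          have hji : j = i := by
            by_contra hne
            have : j < i := by
              rcases Nat.lt_or_ge j i with h | h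
              · exact h
              · omega
            exact h2 (List.mem_take_iff_getElem.mpr ⟨j, by omega, hjeq⟩)
          subst hji; exact hjeq.symm
        · rintro rfl
          refine ⟨List.mem_take_iff_getElem.mpr ⟨i, by omega, rfl⟩, ?_⟩
          intro hmem'
          rcases List.mem_take_iff_getElem.mp hmem' with ⟨j, hj, hjeq⟩
          have : j = i := (List.Nodup.getElem_inj_iff hnodup (hi := by omega) (hj := hlen)).mp hjeq
          omega
      rw [hdiff, Set.ncard_singleton]
end

section
/- Let L be a finite lattice, let f : L → ℝ be a submodular function, let k ∈ ℝ, and let P = {p ∈ L : f(p) < k} be nonempty. If p ∈ P maximises f over P (that is, f(q) ≤ f(p) for all q ∈ P), then P ∖ {p} is woven in L. -/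
/-- If `L` is a finite lattice, `f : L → ℝ` is submodular, `P = {p | f p < k}`
is nonempty and `p ∈ P` maximises `f` over `P`, then `P ∖ {p}` is woven in `L`. -/
theorem stmt_3 {L : Type*} [Lattice L] [Fintype L] (f : L → ℝ)
    (hf : ∀ p q : L, f (p ⊔ q) + f (p ⊓ q) ≤ f p + f q) (k : ℝ)
    (P : Set L) (hP : P = {p : L | f p < k}) (hne : P.Nonempty)
    (p : L) (hp : p ∈ P) (hmax : ∀ q ∈ P, f q ≤ f p) :
    WovenIn (P \ {p}) := by
  subst hP
  rintro a ⟨ha, hanp⟩ b ⟨hb, hbnp⟩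
  simp only [Set.mem_setOf_eq, Set.mem_diff, Set.mem_singleton_iff] at *
  have hsub := hf a b
  have hap := hmax a ha
  have hbp := hmax b hb
  by_cases hjoin : f (a ⊔ b) < k
  · by_cases hjp : a ⊔ b = p
    · right
      constructor
      · have : f (a ⊓ b) ≤ f b := by
          have := hf a b; rw [hjp] at this; linarith
        exact lt_of_le_of_lt this hb
      · intro hmp
        apply hanp
        have h1 : a ≤ a ⊔ b := le_sup_left
        have h2 : a ⊓ b ≤ a := inf_le_left
        rw [hjp] at h1; rw [hmp] at h2
        exact le_antisymm h1 h2
    · exact Or.inl ⟨hjoin, hjp⟩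
  · right
    push_neg at hjoin
    constructor
    · linarith
    · intro hmp
      rw [hmp] at hsub
      linarith
end

section
/- For every finite lattice L there exists an injective submodular function ρ : L → ℕ. Moreover, ρ can be chosen so that for all p₁, p₂, q₁, q₂ ∈ L, one has ρ(p₁) + ρ(p₂) = ρ(q₁) + ρ(q₂) if and only if {p₁, p₂} = {q₁, q₂} (as unordered pairs). -/
lemma sidon_aux : ∀ s a b c d : ℕ, a + b + c + d = s →
    2 ^ a + 2 ^ b = 2 ^ c + 2 ^ d → (a = c ∧ b = d) ∨ (a = d ∧ b = c) := by
  intro s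
  induction s using Nat.strong_induction_on with
  | _ s IH =>
    intro a b c d hs h
    rcases a with _ | a <;> rcases b with _ | b <;> rcases c with _ | c <;> rcases d with _ | d
    all_goals simp only [pow_succ, pow_zero] at h ⊢
    all_goals (try omega)
    all_goals
      try (have ha : 0 < 2 ^ a := pow_pos (by norm_num) _)
    all_goals
      try (have hb : 0 < 2 ^ b := pow_pos (by norm_num) _)
    all_goals
      try (have hc : 0 < 2 ^ c := pow_pos (by norm_num) _)
    all_goals
      try (have hd : 0 < 2 ^ d := pow_pos (by norm_num) _)
    all_goals (try omega)
    case zero.zero.zero.zero => simp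
    case zero.succ.zero.succ =>
      have h' : (2:ℕ) ^ b = 2 ^ d := by omega
      have := Nat.pow_right_injective (le_refl 2) h'
      simp only [true_and, and_true]
      omega
    case zero.succ.succ.zero =>
      have h' : (2:ℕ) ^ b = 2 ^ c := by omega
      have := Nat.pow_right_injective (le_refl 2) h'
      simp only [true_and, and_true]
      omega
    case succ.zero.zero.succ =>
      have h' : (2:ℕ) ^ a = 2 ^ d := by omega
      have := Nat.pow_right_injective (le_refl 2) h'
      simp only [true_and, and_true]
      omega
    case succ.zero.succ.zero =>
      have h' : (2:ℕ) ^ a = 2 ^ c := by omega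
      have := Nat.pow_right_injective (le_refl 2) h'
      simp only [true_and, and_true]
      omega
    case succ.succ.succ.succ =>
      have h' : (2:ℕ) ^ a + 2 ^ b = 2 ^ c + 2 ^ d := by omega
      rcases IH (a + b + c + d) (by omega) a b c d rfl h' with ⟨h1, h2⟩ | ⟨h1, h2⟩ <;> omega

lemma sidon_pow2 (a b c d : ℕ) (h : 2 ^ a + 2 ^ b = 2 ^ c + 2 ^ d) :
    (a = c ∧ b = d) ∨ (a = d ∧ b = c) := sidon_aux (a + b + c + d) a b c d rfl h

/-- For every finite lattice `L` there is an injective submodular function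
`ρ : L → ℕ` such that moreover `ρ p₁ + ρ p₂ = ρ q₁ + ρ q₂` iff
`{p₁, p₂} = {q₁, q₂}` as unordered pairs. -/
theorem stmt_4 {L : Type*} [Lattice L] [Fintype L] :
    ∃ ρ : L → ℕ, Function.Injective ρ ∧
      (∀ p q : L, ρ (p ⊔ q) + ρ (p ⊓ q) ≤ ρ p + ρ q) ∧
      (∀ p₁ p₂ q₁ q₂ : L,
        ρ p₁ + ρ p₂ = ρ q₁ + ρ q₂ ↔ ({p₁, p₂} : Set L) = {q₁, q₂}) := by
  classical
  set n := Fintype.card L with hn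
  let e : L ≃ Fin n := Fintype.equivFin L
  set N : ℕ := 2 ^ (n + 1) with hN
  set T : L → Finset L := fun p => Finset.univ.filter (fun x => ¬ p ≤ x) with hT
  set σ : L → ℕ := fun p => (T p).card with hσ
  set a : L → ℕ := fun p => 2 ^ (e p : ℕ) with ha
  -- bound on a
  have ha_lt : ∀ p : L, a p < 2 ^ n := by
    intro p
    exact Nat.pow_lt_pow_right (by norm_num) (e p).isLt
  have ha_sum : ∀ p q : L, a p + a q < N := by
    intro p q
    have := ha_lt p; have := ha_lt q
    have : 2 ^ n + 2 ^ n = N := by rw [hN, pow_succ]; ring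
    omega
  set ρ : L → ℕ := fun p => N * σ p + a p with hρ
  -- key iff (third property)
  have key : ∀ p₁ p₂ q₁ q₂ : L,
      ρ p₁ + ρ p₂ = ρ q₁ + ρ q₂ ↔ ({p₁, p₂} : Set L) = {q₁, q₂} := by
    intro p₁ p₂ q₁ q₂
    rw [Set.pair_eq_pair_iff]
    constructor
    · intro h
      have h' : N * (σ p₁ + σ p₂) + (a p₁ + a p₂) = N * (σ q₁ + σ q₂) + (a q₁ + a q₂) := by
        simp only [hρ] at h; ring_nf at h ⊢; omega
      have hm1 := ha_sum p₁ p₂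
      have hm2 := ha_sum q₁ q₂
      have heq : a p₁ + a p₂ = a q₁ + a q₂ := by
        have e1 : (N * (σ p₁ + σ p₂) + (a p₁ + a p₂)) % N = a p₁ + a p₂ := by
          rw [Nat.mul_add_mod, Nat.mod_eq_of_lt hm1]
        have e2 : (N * (σ q₁ + σ q₂) + (a q₁ + a q₂)) % N = a q₁ + a q₂ := by
          rw [Nat.mul_add_mod, Nat.mod_eq_of_lt hm2]
        rw [← e1, ← e2, h']
      have := sidon_pow2 (e p₁) (e p₂) (e q₁) (e q₂) heq
      rcases this with ⟨h1, h2⟩ | ⟨h1, h2⟩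
      · left
        have hp1 : e p₁ = e q₁ := Fin.ext h1
        have hp2 : e p₂ = e q₂ := Fin.ext h2
        exact ⟨e.injective hp1, e.injective hp2⟩
      · right
        have hp1 : e p₁ = e q₂ := Fin.ext h1
        have hp2 : e p₂ = e q₁ := Fin.ext h2
        exact ⟨e.injective hp1, e.injective hp2⟩
    · rintro (⟨rfl, rfl⟩ | ⟨rfl, rfl⟩)
      · rfl
      · ring
  refine ⟨ρ, ?_, ?_, key⟩
  · -- injectivity
    intro p q h
    have : ρ p + ρ p = ρ q + ρ p := by omega
    rcases (Set.pair_eq_pair_iff.mp ((key p p q p).mp this)) with ⟨h1, _⟩ | ⟨_, h2⟩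
    · exact h1
    · exact h2
  · -- submodularity
    intro p q
    by_cases hpq : p ≤ q
    · have h1 : p ⊔ q = q := sup_eq_right.mpr hpq
      have h2 : p ⊓ q = p := inf_eq_left.mpr hpq
      rw [h1, h2]; omega
    by_cases hqp : q ≤ p
    · have h1 : p ⊔ q = p := sup_eq_left.mpr hqp
      have h2 : p ⊓ q = q := inf_eq_right.mpr hqp
      rw [h1, h2]
    · -- incomparable: strict drop in σ
      have hstrict : σ (p ⊔ q) + σ (p ⊓ q) + 1 ≤ σ p + σ q := by
        have h1 : T (p ⊔ q) ⊆ T p ∪ T q := by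
          intro x hx
          simp only [hT, Finset.mem_filter, Finset.mem_union, Finset.mem_univ, true_and] at hx ⊢
          by_contra hc
          push_neg at hc
          exact hx (sup_le hc.1 hc.2)
        have h2 : insert (p ⊓ q) (T (p ⊓ q)) ⊆ T p ∩ T q := by
          intro x hx
          simp only [hT, Finset.mem_insert, Finset.mem_filter, Finset.mem_univ, true_and] at hx
          simp only [hT, Finset.mem_inter, Finset.mem_filter, Finset.mem_univ, true_and]
          rcases hx with rfl | hx
          · exact ⟨fun h => hpq (le_trans h inf_le_right), fun h => hqp (le_trans h inf_le_left)⟩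
          · exact ⟨fun h => hx (le_trans inf_le_left h), fun h => hx (le_trans inf_le_right h)⟩
        have h3 : p ⊓ q ∉ T (p ⊓ q) := by simp [hT]
        have h4 := Finset.card_le_card h1
        have h5 := Finset.card_le_card h2
        rw [Finset.card_insert_of_notMem h3] at h5
        have h6 := Finset.card_union_add_card_inter (T p) (T q)
        simp only [hσ]
        omega
      have hasum := ha_sum (p ⊔ q) (p ⊓ q)
      have : N * (σ (p ⊔ q) + σ (p ⊓ q) + 1) ≤ N * (σ p + σ q) :=
        Nat.mul_le_mul_left N hstrict
      have h7 : N * σ (p ⊔ q) + N * σ (p ⊓ q) + N ≤ N * σ p + N * σ q := by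
        calc N * σ (p ⊔ q) + N * σ (p ⊓ q) + N = N * (σ (p ⊔ q) + σ (p ⊓ q) + 1) := by ring
          _ ≤ N * (σ p + σ q) := this
          _ = N * σ p + N * σ q := by ring
      simp only [hρ]
      clear hpq hqp this hstrict
      linarith [Nat.zero_le (a p), Nat.zero_le (a q)]
end

section
/- Let V be a finite set, let f : 2^V → ℝ be a submodular function on the subsets of V, let k ∈ ℝ, and let 𝒳 = {X ⊆ V : f(X) < k}. Then 𝒳 can be unravelled: there is a sequence 𝒳 = 𝒳_n ⊇ 𝒳_{n−1} ⊇ ⋯ ⊇ 𝒳_0 = ∅ of families, each woven, such that |𝒳_i ∖ 𝒳_{i−1}| = 1 for every 1 ≤ i ≤ n. -/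
open Classical in
/-- The key used to order the sets: first by `f`-value, then by decreasing
cardinality (encoded as cardinality of the complement), then an arbitrary
injective tiebreak. -/
noncomputable def stmt5Key {V : Type*} [Fintype V] (f : Set V → ℝ) (X : Set V) :
    ℝ ×ₗ (ℕ ×ₗ ℕ) :=
  toLex (f X, toLex ((Xᶜ).ncard, (Fintype.equivFin (Set V)) X))

lemma stmt5Key_injective {V : Type*} [Fintype V] (f : Set V → ℝ) :
    Function.Injective (stmt5Key f) := by
  intro X Y h
  have h2 := congrArg (fun p => (ofLex (ofLex p).2).2) h
  simp only [stmt5Key, ofLex_toLex] at h2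
  exact (Fintype.equivFin (Set V)).injective (Fin.val_injective h2)

lemma stmt5Key_lt {V : Type*} [Fintype V] (f : Set V → ℝ) {X Y : Set V}
    (h : f X < f Y ∨ (f X = f Y ∧ (Xᶜ).ncard < (Yᶜ).ncard)) :
    stmt5Key f X < stmt5Key f Y := by
  rcases h with h | ⟨h1, h2⟩
  · exact Prod.Lex.lt_iff.2 (Or.inl h)
  · exact Prod.Lex.lt_iff.2 (Or.inr ⟨h1, Prod.Lex.lt_iff.2 (Or.inl h2)⟩)

/-- The main combinatorial claim: if `X` and `Y` are incomparable members of the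
sublevel family, then `X ∪ Y` or `X ∩ Y` is in the family and has strictly
smaller key than `X` or than `Y`. -/
lemma stmt5_claim {V : Type*} [Fintype V] (f : Set V → ℝ)
    (hf : ∀ X Y : Set V, f (X ∪ Y) + f (X ∩ Y) ≤ f X + f Y) (k : ℝ)
    {X Y : Set V} (hXY : ¬ X ⊆ Y) (hYX : ¬ Y ⊆ X)
    (hX : f X < k) (hY : f Y < k) :
    ∃ Z, (Z = X ∪ Y ∨ Z = X ∩ Y) ∧ f Z < k ∧
      (stmt5Key f Z < stmt5Key f X ∨ stmt5Key f Z < stmt5Key f Y) := by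
  set m := max (f X) (f Y) with hm
  by_cases hu : f (X ∪ Y) < m
  · refine ⟨X ∪ Y, Or.inl rfl, lt_of_lt_of_le hu (by simp [hm, le_of_lt hX, le_of_lt hY, max_le_iff, hX.le, hY.le]) , ?_⟩
    rcases max_cases (f X) (f Y) with ⟨he, _⟩ | ⟨he, _⟩
    · exact Or.inl (stmt5Key_lt f (Or.inl (he ▸ hu)))
    · exact Or.inr (stmt5Key_lt f (Or.inl (he ▸ hu)))
  · by_cases hi : f (X ∩ Y) < m
    · refine ⟨X ∩ Y, Or.inr rfl, lt_of_lt_of_le hi (by simp [hm, max_le_iff, hX.le, hY.le]), ?_⟩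
      rcases max_cases (f X) (f Y) with ⟨he, _⟩ | ⟨he, _⟩
      · exact Or.inl (stmt5Key_lt f (Or.inl (he ▸ hi)))
      · exact Or.inr (stmt5Key_lt f (Or.inl (he ▸ hi)))
    · -- all four values equal `m`
      push_neg at hu hi
      have hsum := hf X Y
      have hXm : f X ≤ m := le_max_left _ _
      have hYm : f Y ≤ m := le_max_right _ _
      have hum : f (X ∪ Y) = m := le_antisymm (by linarith) hu
      have hXeq : f X = m := by linarith
      have hcard : ((X ∪ Y)ᶜ).ncard < (Xᶜ).ncard := by
        apply Set.ncard_lt_ncard _ (Set.toFinite _)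
        obtain ⟨y, hy, hyX⟩ := Set.not_subset.1 hYX
        refine ⟨Set.compl_subset_compl.2 Set.subset_union_left, fun h => ?_⟩
        exact (h hyX) (Or.inr hy)
      exact ⟨X ∪ Y, Or.inl rfl, by rw [hum, ← hXeq]; exact hX,
        Or.inl (stmt5Key_lt f (Or.inr ⟨by rw [hum, hXeq], hcard⟩))⟩

/-- If `V` is a finite set, `f : 2^V → ℝ` is submodular and
`𝒳 = {X | f X < k}`, then `𝒳` can be unravelled: there is a chain
`∅ = 𝒳₀ ⊆ 𝒳₁ ⊆ ⋯ ⊆ 𝒳ₙ = 𝒳` of woven families, each step adding exactly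
one set. -/
theorem stmt_5 {V : Type*} [Fintype V] (f : Set V → ℝ)
    (hf : ∀ X Y : Set V, f (X ∪ Y) + f (X ∩ Y) ≤ f X + f Y) (k : ℝ) :
    ∃ (n : ℕ) (c : ℕ → Set (Set V)),
      c 0 = ∅ ∧ c n = {X : Set V | f X < k} ∧
      (∀ i ≤ n, ∀ X ∈ c i, ∀ Y ∈ c i, X ∪ Y ∈ c i ∨ X ∩ Y ∈ c i) ∧
      (∀ i < n, c i ⊆ c (i + 1) ∧ (c (i + 1) \ c i).ncard = 1) := by
  classical
  have hS : ({X : Set V | f X < k}).Finite := Set.toFinite _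
  set κ := stmt5Key f with hκ
  set s : Finset (Set V) := hS.toFinset with hs
  set T : Finset (ℝ ×ₗ (ℕ ×ₗ ℕ)) := s.image κ with hT
  set l := T.sort (· ≤ ·) with hl
  have hlmem : ∀ X : Set V, f X < k → κ X ∈ l := by
    intro X hX
    rw [hl, Finset.mem_sort]
    exact Finset.mem_image.2 ⟨X, by simpa [hs] using hX, rfl⟩
  have hpair : ∀ i, ∀ a ∈ l.take i, ∀ b ∈ l.drop i, a < b := by
    intro i a ha b hb
    have hsrt : List.Pairwise (· < ·) (l.take i ++ l.drop i) := by
      rw [List.take_append_drop]; exact (Finset.sortedLT_sort T).pairwise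
    exact (List.pairwise_append.1 hsrt).2.2 a ha b hb
  -- key closure fact: elements of `l` below something in `l.take i` lie in `l.take i`
  have hclose : ∀ i, ∀ a ∈ l, ∀ b ∈ l.take i, a < b → a ∈ l.take i := by
    intro i a ha b hb hab
    rw [← List.take_append_drop i l, List.mem_append] at ha
    rcases ha with ha | ha
    · exact ha
    · exact absurd (hpair i b hb a ha) (by exact fun h => absurd (hab.trans h) (lt_irrefl _))
  refine ⟨l.length, fun i => {X | f X < k ∧ κ X ∈ l.take i}, ?_, ?_, ?_, ?_⟩
  · simp
  · ext X
    simp only [Set.mem_setOf_eq, List.take_length]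
    exact ⟨fun h => h.1, fun h => ⟨h, hlmem X h⟩⟩
  · rintro i hi X ⟨hXk, hXt⟩ Y ⟨hYk, hYt⟩
    by_cases hxy : X ⊆ Y
    · exact Or.inl (by rw [Set.union_eq_self_of_subset_left hxy]; exact ⟨hYk, hYt⟩)
    by_cases hyx : Y ⊆ X
    · exact Or.inl (by rw [Set.union_eq_self_of_subset_right hyx]; exact ⟨hXk, hXt⟩)
    obtain ⟨Z, hZ, hZk, hlt⟩ := stmt5_claim f hf k hxy hyx hXk hYk
    have hZmem : κ Z ∈ l.take i := by
      rcases hlt with h | h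
      · exact hclose i (κ Z) (hlmem Z hZk) (κ X) hXt h
      · exact hclose i (κ Z) (hlmem Z hZk) (κ Y) hYt h
    rcases hZ with rfl | rfl
    · exact Or.inl ⟨hZk, hZmem⟩
    · exact Or.inr ⟨hZk, hZmem⟩
  · intro i hin
    have hget : l[i]? = some l[i] := List.getElem?_eq_getElem hin
    have htake : l.take (i + 1) = l.take i ++ [l[i]] := by
      rw [List.take_succ, hget]; rfl
    have hnotin : l[i] ∉ l.take i := by
      intro h
      have hdrop : l[i] ∈ l.drop i := by
        rw [List.drop_eq_getElem_cons hin]; exact List.mem_cons_self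
      exact absurd (hpair i _ h _ hdrop) (lt_irrefl _)
    constructor
    · rintro X ⟨h1, h2⟩
      exact ⟨h1, by rw [htake]; exact List.mem_append_left _ h2⟩
    · -- the unique new set
      have hiT : l[i] ∈ T := by
        rw [hl] at *
        exact (Finset.mem_sort _).1 (List.getElem_mem hin)
      obtain ⟨X0, hX0s, hX0κ⟩ := Finset.mem_image.1 hiT
      have hX0k : f X0 < k := by simpa [hs] using hX0s
      have : {X : Set V | f X < k ∧ κ X ∈ l.take (i+1)} \ {X | f X < k ∧ κ X ∈ l.take i}
          = {X0} := by
        ext X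
        simp only [Set.mem_diff, Set.mem_setOf_eq, Set.mem_singleton_iff, htake,
          List.mem_append, List.mem_singleton, not_and]
        constructor
        · rintro ⟨⟨hXk, hmem | heq⟩, hnot⟩
          · exact absurd hmem (hnot hXk)
          · exact stmt5Key_injective f (heq.trans hX0κ.symm)
        · rintro rfl
          exact ⟨⟨hX0k, Or.inr hX0κ⟩, fun _ h => hnotin (hX0κ ▸ h)⟩
      rw [this, Set.ncard_singleton]
end

section
/- Let U be a finite lattice equipped with an order-reversing involution * (a universe of separations). Then there exists a submodular function γ : U → ℕ that is symmetric, i.e. γ(s) = γ(s*) for all s ∈ U, and that distinguishes unoriented separations: for all r, s ∈ U, if γ(r) = γ(s) then r = s or r = s*. -/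
lemma sum_lt3 (f : ℕ → ℕ) (hf : ∀ i, f i ≤ 2) (n : ℕ) :
    ∑ i ∈ Finset.range n, 3 ^ i * f i < 3 ^ n := by
  induction n with
  | zero => simp
  | succ n ih =>
    rw [Finset.sum_range_succ, pow_succ]
    have h1 := hf n
    have h2 : 3 ^ n * f n ≤ 3 ^ n * 2 := Nat.mul_le_mul_left _ h1
    omega

lemma digits_inj3 (f g : ℕ → ℕ) (hf : ∀ i, f i ≤ 2) (hg : ∀ i, g i ≤ 2) (n : ℕ)
    (h : ∑ i ∈ Finset.range n, 3 ^ i * f i = ∑ i ∈ Finset.range n, 3 ^ i * g i) :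
    ∀ i < n, f i = g i := by
  induction n with
  | zero => omega
  | succ n ih =>
    rw [Finset.sum_range_succ, Finset.sum_range_succ] at h
    have bf := sum_lt3 f hf n
    have bg := sum_lt3 g hg n
    have hfn := hf n
    have hgn := hg n
    have hP : (0:ℕ) < 3 ^ n := by positivity
    have heq : f n = g n := by
      rcases (by omega : f n = 0 ∨ f n = 1 ∨ f n = 2) with h1 | h1 | h1 <;>
        rcases (by omega : g n = 0 ∨ g n = 1 ∨ g n = 2) with h2 | h2 | h2 <;>
          rw [h1, h2] at h ⊢ <;> omega
    rw [heq] at h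
    have h' : ∑ i ∈ Finset.range n, 3 ^ i * f i = ∑ i ∈ Finset.range n, 3 ^ i * g i := by omega
    intro i hi
    rcases Nat.lt_succ_iff_lt_or_eq.mp hi with hi' | hi'
    · exact ih h' i hi'
    · rw [hi', heq]

lemma combin_aux {U : Type*} [Lattice U] (star : U → U)
    (hinv : ∀ s : U, star (star s) = s)
    (hanti : ∀ s t : U, s ≤ t → star t ≤ star s) (r s : U)
    (key : ∀ a : U, ((r ≤ a ∨ star r ≤ a) ↔ (s ≤ a ∨ star s ≤ a)) ∧
      ((r ≤ a ∧ star r ≤ a) ↔ (s ≤ a ∧ star s ≤ a)))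
    (hsr : s ≤ r) : r = s ∨ r = star s := by
  by_cases hrs : r ≤ s
  · exact Or.inl (le_antisymm hrs hsr)
  · -- from key at s : r ≤ s ∨ star r ≤ s
    have h1 : r ≤ s ∨ star r ≤ s := (key s).1.mpr (Or.inl le_rfl)
    have hstar_r_s : star r ≤ s := h1.resolve_left hrs
    have hstar_r_r : star r ≤ r := hstar_r_s.trans hsr
    -- key ∧-part at r : s ≤ r ∧ star s ≤ r
    have h2 : s ≤ r ∧ star s ≤ r := (key r).2.mp ⟨le_rfl, hstar_r_r⟩
    -- key or-part at star r
    have h3 : s ≤ star r ∨ star s ≤ star r := (key (star r)).1.mp (Or.inr le_rfl)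
    rcases h3 with h3 | h3
    · -- s ≤ star r ⇒ r ≤ star s
      have : r ≤ star s := by
        have := hanti _ _ h3
        rwa [hinv] at this
      exact Or.inr (le_antisymm this h2.2)
    · -- star s ≤ star r ⇒ r ≤ s, contradiction
      exfalso
      apply hrs
      have := hanti _ _ h3
      rwa [hinv, hinv] at this

lemma combin {U : Type*} [Lattice U] (star : U → U)
    (hinv : ∀ s : U, star (star s) = s)
    (hanti : ∀ s t : U, s ≤ t → star t ≤ star s) (r s : U)
    (key : ∀ a : U, ((r ≤ a ∨ star r ≤ a) ↔ (s ≤ a ∨ star s ≤ a)) ∧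
      ((r ≤ a ∧ star r ≤ a) ↔ (s ≤ a ∧ star s ≤ a))) :
    r = s ∨ r = star s := by
  have h0 : s ≤ r ∨ star s ≤ r := (key r).1.mp (Or.inl le_rfl)
  rcases h0 with h0 | h0
  · exact combin_aux star hinv hanti r s key h0
  · have key' : ∀ a : U, ((r ≤ a ∨ star r ≤ a) ↔ (star s ≤ a ∨ star (star s) ≤ a)) ∧
        ((r ≤ a ∧ star r ≤ a) ↔ (star s ≤ a ∧ star (star s) ≤ a)) := by
      intro a
      rw [hinv]
      constructor
      · rw [(key a).1]; tauto
      · rw [(key a).2]; tauto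
    rcases combin_aux star hinv hanti r (star s) key' h0 with h | h
    · exact Or.inr h
    · rw [hinv] at h; exact Or.inl h

lemma ineq1 (P Q PQ PmQ : Prop) [Decidable P] [Decidable Q] [Decidable PQ] [Decidable PmQ]
    (h1 : P → PmQ) (h2 : Q → PmQ) (h3 : P → Q → PQ) :
    ((if PQ then 0 else 1) + (if PmQ then 0 else 1) : ℕ) ≤
    (if P then 0 else 1) + (if Q then 0 else 1) := by
  split_ifs <;> first | omega | tauto

open Classical in
noncomputable def Dfun {U : Type*} [Lattice U] (star : U → U) (s a : U) : ℕ :=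
  (if s ≤ a then 0 else 1) + (if star s ≤ a then 0 else 1)

lemma Dfun_le_two {U : Type*} [Lattice U] (star : U → U) (s a : U) :
    Dfun star s a ≤ 2 := by
  unfold Dfun; split_ifs <;> omega

lemma Dfun_star {U : Type*} [Lattice U] (star : U → U)
    (hinv : ∀ s : U, star (star s) = s) (s a : U) :
    Dfun star (star s) a = Dfun star s a := by
  unfold Dfun; rw [hinv s]; exact add_comm _ _

lemma star_inf_le {U : Type*} [Lattice U] (star : U → U)
    (hinv : ∀ s : U, star (star s) = s)
    (hanti : ∀ s t : U, s ≤ t → star t ≤ star s) (s t : U) :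
    star (s ⊓ t) ≤ star s ⊔ star t := by
  have h1 : star (star s ⊔ star t) ≤ s := by
    have := hanti _ _ (le_sup_left : star s ≤ star s ⊔ star t); rwa [hinv] at this
  have h2 : star (star s ⊔ star t) ≤ t := by
    have := hanti _ _ (le_sup_right : star t ≤ star s ⊔ star t); rwa [hinv] at this
  have h3 := hanti _ _ (le_inf h1 h2)
  rwa [hinv] at h3

lemma Dfun_submod {U : Type*} [Lattice U] (star : U → U)
    (hinv : ∀ s : U, star (star s) = s)
    (hanti : ∀ s t : U, s ≤ t → star t ≤ star s) (s t a : U) :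
    Dfun star (s ⊔ t) a + Dfun star (s ⊓ t) a ≤ Dfun star s a + Dfun star t a := by
  classical
  have A := ineq1 (s ≤ a) (t ≤ a) (s ⊔ t ≤ a) (s ⊓ t ≤ a)
    (fun h => inf_le_left.trans h) (fun h => inf_le_right.trans h) (fun h1 h2 => sup_le h1 h2)
  have B := ineq1 (star s ≤ a) (star t ≤ a) (star (s ⊓ t) ≤ a) (star (s ⊔ t) ≤ a)
    (fun h => (hanti _ _ le_sup_left).trans h)
    (fun h => (hanti _ _ le_sup_right).trans h)
    (fun h1 h2 => (star_inf_le star hinv hanti s t).trans (sup_le h1 h2))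
  unfold Dfun
  convert Nat.add_le_add A B using 1 <;> omega

lemma Dfun_key {U : Type*} [Lattice U] (star : U → U) (r s a : U)
    (h : Dfun star r a = Dfun star s a) :
    ((r ≤ a ∨ star r ≤ a) ↔ (s ≤ a ∨ star s ≤ a)) ∧
      ((r ≤ a ∧ star r ≤ a) ↔ (s ≤ a ∧ star s ≤ a)) := by
  unfold Dfun at h
  split_ifs at h <;> first | omega | tauto

/-- If `U` is a finite lattice with an order-reversing involution `star`
(a universe of separations), then there is a submodular function `γ : U → ℕ`
that is symmetric (`γ (star s) = γ s`) and distinguishes unoriented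
separations: `γ r = γ s` implies `r = s` or `r = star s`. -/
theorem stmt_6 {U : Type*} [Lattice U] [Fintype U] (star : U → U)
    (hinv : ∀ s : U, star (star s) = s)
    (hanti : ∀ s t : U, s ≤ t → star t ≤ star s) :
    ∃ γ : U → ℕ,
      (∀ s t : U, γ (s ⊔ t) + γ (s ⊓ t) ≤ γ s + γ t) ∧
      (∀ s : U, γ (star s) = γ s) ∧
      (∀ r s : U, γ r = γ s → r = s ∨ r = star s) := by
  classical
  set n := Fintype.card U with hn
  set e := Fintype.equivFin U with he
  set w : U → ℕ → ℕ := fun s i => if h : i < n then Dfun star s (e.symm ⟨i, h⟩) else 0 with hw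
  refine ⟨fun s => ∑ i ∈ Finset.range n, 3 ^ i * w s i, ?_, ?_, ?_⟩
  · -- submodular
    intro s t
    rw [← Finset.sum_add_distrib, ← Finset.sum_add_distrib]
    refine Finset.sum_le_sum fun i _ => ?_
    rw [← Nat.mul_add, ← Nat.mul_add]
    refine Nat.mul_le_mul_left _ ?_
    simp only [hw]
    by_cases h : i < n
    · simp only [dif_pos h]
      exact Dfun_submod star hinv hanti s t _
    · simp [dif_neg h]
  · -- symmetric
    intro s
    refine Finset.sum_congr rfl fun i _ => ?_
    congr 1
    simp only [hw]
    by_cases h : i < n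
    · simp only [dif_pos h]
      exact Dfun_star star hinv s _
    · simp [dif_neg h]
  · -- distinguishing
    intro r s hrs
    have hwle : ∀ u : U, ∀ i, w u i ≤ 2 := by
      intro u i
      simp only [hw]
      by_cases h : i < n
      · simp only [dif_pos h]; exact Dfun_le_two star u _
      · simp [dif_neg h]
    have hall := digits_inj3 (w r) (w s) (hwle r) (hwle s) n hrs
    have hD : ∀ a : U, Dfun star r a = Dfun star s a := by
      intro a
      have hi : (e a : ℕ) < n := (e a).2
      have := hall (e a) hi
      simp only [hw, dif_pos hi] at this
      rwa [Fin.eta, Equiv.symm_apply_apply] at this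
    exact combin star hinv hanti r s fun a => Dfun_key star r s a (hD a)
end

section
/- Let U be a finite lattice equipped with an order-reversing involution * (a universe of separations), let f : U → ℝ be a submodular function with f(s) = f(s*) for all s, let k ∈ ℝ, and let S = {s ∈ U : f(s) < k}. Then S can be unravelled as a separation system: there is a sequence S = S_n ⊇ S_{n−1} ⊇ ⋯ ⊇ S_0 = ∅ of subsets of U, each closed under * and woven in U, such that for every 1 ≤ i ≤ n the set S_i ∖ S_{i−1} equals {s_i, s_i*} for some s_i ∈ U. -/
/-- If `U` is a finite lattice with an order-reversing involution `star`,
`f : U → ℝ` is a symmetric submodular function, and `S = {s | f s < k}`, then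
`S` can be unravelled as a separation system: there is a chain
`∅ = S₀ ⊆ ⋯ ⊆ Sₙ = S` of star-closed sets woven in `U`, each step adding
exactly `{s, star s}` for some `s`. -/
theorem stmt_7 {U : Type*} [Lattice U] [Fintype U] (star : U → U)
    (hinv : ∀ s : U, star (star s) = s)
    (hanti : ∀ s t : U, s ≤ t → star t ≤ star s)
    (f : U → ℝ)
    (hf : ∀ s t : U, f (s ⊔ t) + f (s ⊓ t) ≤ f s + f t)
    (hsymm : ∀ s : U, f (star s) = f s) (k : ℝ) :
    ∃ (n : ℕ) (c : ℕ → Set U),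
      c 0 = ∅ ∧ c n = {s : U | f s < k} ∧
      (∀ i ≤ n, WovenIn (c i) ∧ ∀ s ∈ c i, star s ∈ c i) ∧
      (∀ i < n, c i ⊆ c (i + 1) ∧
        ∃ s : U, c (i + 1) \ c i = {s, star s}) := by
  set S : Set U := {s : U | f s < k} with hSdef
  suffices key : ∀ (N : ℕ) (A : Set U), A ⊆ S → (∀ s ∈ A, star s ∈ A) → WovenIn A →
      (∀ a ∈ A, ∀ y ∈ S \ A, f a ≤ f y) → (S \ A).ncard ≤ N →
      ∃ (n : ℕ) (c : ℕ → Set U), c 0 = A ∧ c n = S ∧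
        (∀ i ≤ n, WovenIn (c i) ∧ ∀ s ∈ c i, star s ∈ c i) ∧
        (∀ i < n, c i ⊆ c (i + 1) ∧ ∃ s : U, c (i + 1) \ c i = {s, star s}) by
    exact key (S \ ∅).ncard ∅ (Set.empty_subset _) (by intro s hs; exact absurd hs (Set.notMem_empty s))
      (by intro p hp; exact absurd hp (Set.notMem_empty p))
      (by intro a ha; exact absurd ha (Set.notMem_empty a)) le_rfl
  intro N
  induction N with
  | zero =>
    intro A hAS hstar hwov _ hcard
    have hempty : S \ A = ∅ := (Set.ncard_eq_zero (Set.toFinite _)).mp (Nat.le_zero.mp hcard)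
    have hAeq : A = S := Set.Subset.antisymm hAS (Set.diff_eq_empty.mp hempty)
    exact ⟨0, fun _ => A, rfl, hAeq, fun i _ => ⟨hwov, hstar⟩,
      fun i hi => absurd hi (Nat.not_lt_zero i)⟩
  | succ N ih =>
    intro A hAS hstar hwov hINV hcard
    by_cases hA : S \ A = ∅
    · have hAeq : A = S := Set.Subset.antisymm hAS (Set.diff_eq_empty.mp hA)
      exact ⟨0, fun _ => A, rfl, hAeq, fun i _ => ⟨hwov, hstar⟩,
        fun i hi => absurd hi (Nat.not_lt_zero i)⟩
    · have hTne : (S \ A).Nonempty := Set.nonempty_iff_ne_empty.mpr hA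
      obtain ⟨xm, hxmT, hxmmin⟩ := Set.exists_min_image (S \ A) f (Set.toFinite _) hTne
      set W : Set U := {y ∈ S \ A | ∀ z ∈ S \ A, f y ≤ f z} with hWdef
      have hWne : W.Nonempty := ⟨xm, hxmT, hxmmin⟩
      obtain ⟨x, hxW, hxmax⟩ : ∃ x ∈ W, ∀ a' ∈ W, id x ≤ id a' → id x = id a' := by
        obtain ⟨x, hx, hm⟩ := Set.Finite.exists_maximalFor id W (Set.toFinite _) hWne
        exact ⟨x, hx, fun a' ha' h => le_antisymm h (hm ha' h)⟩
      simp only [id] at hxmax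
      obtain ⟨hxT, h2⟩ := hxW
      have hxS : x ∈ S := hxT.1
      have hxA : x ∉ A := hxT.2
      have hxk : f x < k := hxS
      have hsxS : star x ∈ S := by
        show f (star x) < k
        rw [hsymm]; exact hxk
      have hsxA : star x ∉ A := by
        intro h
        have := hstar _ h
        rw [hinv] at this
        exact hxA this
      set A' : Set U := A ∪ {x, star x} with hA'def
      have hmemA' : ∀ y : U, y ∈ A' ↔ y ∈ A ∨ y = x ∨ y = star x := by
        intro y
        rw [hA'def]
        simp only [Set.mem_union, Set.mem_insert_iff, Set.mem_singleton_iff]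
      have hxmem : x ∈ A' := (hmemA' x).mpr (Or.inr (Or.inl rfl))
      have hsxmem : star x ∈ A' := (hmemA' _).mpr (Or.inr (Or.inr rfl))
      have hA'S : A' ⊆ S := by
        intro y hy
        rcases (hmemA' y).mp hy with h | rfl | rfl
        · exact hAS h
        · exact hxS
        · exact hsxS
      have hstar' : ∀ s ∈ A', star s ∈ A' := by
        intro s hs
        rcases (hmemA' s).mp hs with h | rfl | rfl
        · exact (hmemA' _).mpr (Or.inl (hstar s h))
        · exact hsxmem
        · rw [hinv]; exact hxmem
      have hINV' : ∀ a ∈ A', ∀ y ∈ S \ A', f a ≤ f y := by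
        intro a ha y hy
        have hyT : y ∈ S \ A := ⟨hy.1, fun h => hy.2 ((hmemA' y).mpr (Or.inl h))⟩
        rcases (hmemA' a).mp ha with h | rfl | rfl
        · exact hINV a h y hyT
        · exact h2 y hyT
        · rw [hsymm]; exact h2 y hyT
      have hwov' : WovenIn A' := by
        intro p hp q hq
        by_contra hcon
        push_neg at hcon
        obtain ⟨hd, hc⟩ := hcon
        have hfbound : ∀ r ∈ A', f r ≤ f x := by
          intro r hr
          rcases (hmemA' r).mp hr with h | rfl | rfl
          · exact hINV r h x hxT
          · exact le_refl _
          · rw [hsymm]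
        have hfp := hfbound p hp
        have hfq := hfbound q hq
        have hsub := hf p q
        have hdA : p ⊔ q ∉ A := fun h => hd ((hmemA' _).mpr (Or.inl h))
        have hcA : p ⊓ q ∉ A := fun h => hc ((hmemA' _).mpr (Or.inl h))
        have hfc : f x ≤ f (p ⊓ q) := by
          by_contra hlt
          push_neg at hlt
          have hT : p ⊓ q ∈ S \ A := ⟨show f (p ⊓ q) < k by linarith, hcA⟩
          exact absurd (h2 _ hT) (not_le.mpr hlt)
        have hfd : f (p ⊔ q) ≤ f x := by linarith
        have hdT : p ⊔ q ∈ S \ A := ⟨show f (p ⊔ q) < k by linarith, hdA⟩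
        have hfd' : f (p ⊔ q) = f x := le_antisymm hfd (h2 _ hdT)
        have hfc' : f (p ⊓ q) = f x := le_antisymm (by linarith) hfc
        have hcT : p ⊓ q ∈ S \ A := ⟨show f (p ⊓ q) < k by rw [hfc']; exact hxk, hcA⟩
        by_cases hpx : p = x ∨ q = x
        · have hxled : x ≤ p ⊔ q := by
            rcases hpx with rfl | rfl
            · exact le_sup_left
            · exact le_sup_right
          have hmind : ∀ z ∈ S \ A, f (p ⊔ q) ≤ f z := by
            intro z hz; rw [hfd']; exact h2 z hz
          have hxd := hxmax (p ⊔ q) ⟨hdT, hmind⟩ hxled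
          exact hd (hxd ▸ hxmem)
        · by_cases hpsx : p = star x ∨ q = star x
          · have hcle : p ⊓ q ≤ star x := by
              rcases hpsx with rfl | rfl
              · exact inf_le_left
              · exact inf_le_right
            have hscS : star (p ⊓ q) ∈ S := by
              show f (star (p ⊓ q)) < k
              rw [hsymm, hfc']; exact hxk
            have hscA : star (p ⊓ q) ∉ A := by
              intro h
              have := hstar _ h
              rw [hinv] at this
              exact hcA this
            have hxlesc : x ≤ star (p ⊓ q) := by
              have := hanti _ _ hcle
              rwa [hinv] at this
            have hminsc : ∀ z ∈ S \ A, f (star (p ⊓ q)) ≤ f z := by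
              intro z hz; rw [hsymm, hfc']; exact h2 z hz
            have hxeq := hxmax (star (p ⊓ q)) ⟨⟨hscS, hscA⟩, hminsc⟩ hxlesc
            have hceq : p ⊓ q = star x := by rw [hxeq, hinv]
            exact hc ((hmemA' _).mpr (Or.inr (Or.inr hceq)))
          · push_neg at hpx hpsx
            have hpA : p ∈ A := by
              rcases (hmemA' p).mp hp with h | h | h
              · exact h
              · exact absurd h hpx.1
              · exact absurd h hpsx.1
            have hqA : q ∈ A := by
              rcases (hmemA' q).mp hq with h | h | h
              · exact h
              · exact absurd h hpx.2
              · exact absurd h hpsx.2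
            rcases hwov p hpA q hqA with h | h
            · exact hd ((hmemA' _).mpr (Or.inl h))
            · exact hc ((hmemA' _).mpr (Or.inl h))
      have hssub : S \ A' ⊂ S \ A := by
        constructor
        · intro y hy
          exact ⟨hy.1, fun h => hy.2 ((hmemA' y).mpr (Or.inl h))⟩
        · intro hcontra
          exact (hcontra hxT).2 hxmem
      have hcard' : (S \ A').ncard ≤ N := by
        have := Set.ncard_lt_ncard hssub (Set.toFinite _)
        omega
      obtain ⟨n', c', h0', hn', hint', hstep'⟩ := ih A' hA'S hstar' hwov' hINV' hcard'
      refine ⟨n' + 1, fun i => Nat.casesOn i A c', rfl, hn', ?_, ?_⟩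
      · intro i hi
        cases i with
        | zero => exact ⟨hwov, hstar⟩
        | succ j => exact hint' j (Nat.succ_le_succ_iff.mp hi)
      · intro i hi
        cases i with
        | zero =>
          constructor
          · show A ⊆ c' 0
            rw [h0']
            exact fun y hy => (hmemA' y).mpr (Or.inl hy)
          · refine ⟨x, ?_⟩
            show c' 0 \ A = {x, star x}
            rw [h0']
            ext y
            simp only [Set.mem_diff, Set.mem_insert_iff, Set.mem_singleton_iff]
            constructor
            · rintro ⟨hy1, hy2⟩
              rcases (hmemA' y).mp hy1 with h | h | h
              · exact absurd h hy2
              · exact Or.inl h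
              · exact Or.inr h
            · rintro (rfl | rfl)
              · exact ⟨hxmem, hxA⟩
              · exact ⟨hsxmem, hsxA⟩
        | succ j =>
          exact hstep' j (Nat.succ_lt_succ_iff.mp hi)
end

section
/- Let U be a finite lattice equipped with an order-reversing involution *, and let S ⊊ U be a proper subset of U that is closed under * and woven in U. Then there exists r ∈ U ∖ S such that S ∪ {r, r*} is again woven in U. -/
/-- If `U` is a finite lattice with an order-reversing involution `star` and
`S ⊊ U` is star-closed and woven in `U`, then there is `r ∈ U ∖ S` such that
`S ∪ {r, star r}` is again woven in `U`. -/
theorem stmt_8 {U : Type*} [Lattice U] [Fintype U] (star : U → U)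
    (hinv : ∀ s : U, star (star s) = s)
    (hanti : ∀ s t : U, s ≤ t → star t ≤ star s)
    (S : Set U) (hstar : ∀ s ∈ S, star s ∈ S)
    (hwoven : WovenIn S) (hproper : S ≠ Set.univ) :
    ∃ r : U, r ∉ S ∧ WovenIn (S ∪ {r, star r}) := by
  -- star turns joins into meets
  have hsup : ∀ a b : U, star (a ⊔ b) = star a ⊓ star b := by
    intro a b
    apply le_antisymm
    · exact le_inf (hanti _ _ le_sup_left) (hanti _ _ le_sup_right)
    · have h1 : a ≤ star (star a ⊓ star b) := by
        have := hanti _ _ (inf_le_left : star a ⊓ star b ≤ star a)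
        rwa [hinv] at this
      have h2 : b ≤ star (star a ⊓ star b) := by
        have := hanti _ _ (inf_le_right : star a ⊓ star b ≤ star b)
        rwa [hinv] at this
      have := hanti _ _ (sup_le h1 h2)
      rwa [hinv] at this
  -- pick r maximal in the complement of S
  have hne : Sᶜ.Nonempty := by
    rcases Set.ne_univ_iff_exists_notMem S |>.mp hproper with ⟨x, hx⟩
    exact ⟨x, hx⟩
  obtain ⟨r, hrS, hmax⟩ := Set.Finite.exists_maximalFor id Sᶜ (Set.toFinite _) hne
  -- maximality: anything strictly above r is in S
  have habove : ∀ x : U, r ≤ x → x ∈ S ∨ x = r := by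
    intro x hx
    by_cases hxS : x ∈ S
    · exact Or.inl hxS
    · exact Or.inr (le_antisymm (hmax hxS hx) hx)
  refine ⟨r, hrS, ?_⟩
  have memiff : ∀ x : U, x ∈ S ∪ {r, star r} ↔ x ∈ S ∨ x = r ∨ x = star r := by
    intro x; simp [Set.mem_insert_iff]; tauto
  -- key: for p ∈ S, r ⊔ p lands in S ∪ {r}
  have keyS : ∀ p ∈ S, r ⊔ p ∈ S ∪ {r, star r} := by
    intro p hp
    rcases habove (r ⊔ p) le_sup_left with h | h
    · exact Or.inl h
    · rw [memiff]; exact Or.inr (Or.inl h)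
  -- key dual: for p ∈ S, star r ⊓ p lands in S ∪ {star r}
  have keyI : ∀ p ∈ S, star r ⊓ p ∈ S ∪ {r, star r} := by
    intro p hp
    have h2 : star r ⊓ p = star (r ⊔ star p) := by
      rw [hsup, hinv]
    rcases habove (r ⊔ star p) le_sup_left with h | h
    · exact Or.inl (by rw [h2]; exact hstar _ h)
    · rw [memiff]; exact Or.inr (Or.inr (by rw [h2, h]))
  -- r ⊔ star r lands in S ∪ {r}
  have keyR : r ⊔ star r ∈ S ∪ {r, star r} := by
    rcases habove (r ⊔ star r) le_sup_left with h | h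
    · exact Or.inl h
    · rw [memiff]; exact Or.inr (Or.inl h)
  intro p hp q hq
  rw [memiff] at hp hq
  have hrmem : r ∈ S ∪ {r, star r} := (memiff r).mpr (Or.inr (Or.inl rfl))
  have hsrmem : star r ∈ S ∪ {r, star r} := (memiff _).mpr (Or.inr (Or.inr rfl))
  rcases hp with hp | rfl | rfl
  · rcases hq with hq | rfl | rfl
    · rcases hwoven p hp q hq with h | h
      · exact Or.inl (Or.inl h)
      · exact Or.inr (Or.inl h)
    · exact Or.inl (by rw [sup_comm]; exact keyS p hp)
    · exact Or.inr (by rw [inf_comm]; exact keyI p hp)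
  · rcases hq with hq | rfl | rfl
    · exact Or.inl (keyS q hq)
    · exact Or.inl (by rw [sup_idem]; exact hrmem)
    · exact Or.inl keyR
  · rcases hq with hq | rfl | rfl
    · exact Or.inr (keyI q hq)
    · exact Or.inl (by rw [sup_comm]; exact keyR)
    · exact Or.inl (by rw [sup_idem]; exact hsrmem)
end

section
/- Every finite woven poset P can be unravelled: there is a sequence P = P_n ⊇ P_{n−1} ⊇ ⋯ ⊇ P_0 = ∅ of subposets (with the induced order) such that each P_i is a woven poset and |P_i ∖ P_{i−1}| = 1 for every 1 ≤ i ≤ n. -/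
/-- A subset `P` of a poset is woven (as a poset in its own right) if any two
of its elements have a supremum in `P` or an infimum in `P`. -/
def PosetWovenIn {α : Type*} [PartialOrder α] (P : Set α) : Prop :=
  ∀ p ∈ P, ∀ q ∈ P,
    (∃ r ∈ P, p ≤ r ∧ q ≤ r ∧ ∀ s ∈ P, p ≤ s → q ≤ s → r ≤ s) ∨
    (∃ r ∈ P, r ≤ p ∧ r ≤ q ∧ ∀ s ∈ P, s ≤ p → s ≤ q → s ≤ r)

section Aux

variable {α : Type*} [PartialOrder α]

/-- `x` has a successor within `S` : a least strict upper bound in `S`. -/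
def HasSuccIn (S : Set α) (x : α) : Prop :=
  ∃ σ ∈ S, x < σ ∧ ∀ u ∈ S, x < u → σ ≤ u

/-- `x` has a predecessor within `S` : a greatest strict lower bound in `S`. -/
def HasPredIn (S : Set α) (x : α) : Prop :=
  ∃ π ∈ S, π < x ∧ ∀ u ∈ S, u < x → u ≤ π

lemma wovenIn_empty : PosetWovenIn (∅ : Set α) := by
  intro p hp; exact absurd hp (Set.notMem_empty p)

/-- Removing an element with a successor keeps wovenness. -/
lemma wovenIn_diff_of_succ {S : Set α} (hW : PosetWovenIn S) {x : α}
    (hsucc : HasSuccIn S x) : PosetWovenIn (S \ {x}) := by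
  obtain ⟨σ, hσS, hxσ, hσle⟩ := hsucc
  intro p hp q hq
  rcases hW p hp.1 q hq.1 with ⟨r, hrS, hpr, hqr, hlub⟩ | ⟨r, hrS, hrp, hrq, hglb⟩
  · by_cases hr : r = x
    · subst hr
      left
      refine ⟨σ, ⟨hσS, fun hσx => absurd (hσx ▸ hxσ) (lt_irrefl _)⟩,
        hpr.trans hxσ.le, hqr.trans hxσ.le, ?_⟩
      intro s hs hps hqs
      have hrs : r ≤ s := hlub s hs.1 hps hqs
      have : r < s := lt_of_le_of_ne hrs (fun h => hs.2 h.symm)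
      exact hσle s hs.1 this
    · left
      exact ⟨r, ⟨hrS, hr⟩, hpr, hqr, fun s hs hps hqs => hlub s hs.1 hps hqs⟩
  · right
    have hr : r ≠ x := by
      rintro rfl
      have hpx : r < p := lt_of_le_of_ne hrp (fun h => hp.2 h.symm)
      have hqx : r < q := lt_of_le_of_ne hrq (fun h => hq.2 h.symm)
      have h1 : σ ≤ p := hσle p hp.1 hpx
      have h2 : σ ≤ q := hσle q hq.1 hqx
      have : σ ≤ r := hglb σ hσS h1 h2
      exact absurd (lt_of_lt_of_le hxσ this) (lt_irrefl _)
    exact ⟨r, ⟨hrS, hr⟩, hrp, hrq, fun s hs hps hqs => hglb s hs.1 hps hqs⟩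

/-- Removing an element with a predecessor keeps wovenness. -/
lemma wovenIn_diff_of_pred {S : Set α} (hW : PosetWovenIn S) {x : α}
    (hpred : HasPredIn S x) : PosetWovenIn (S \ {x}) := by
  obtain ⟨π, hπS, hπx, hπge⟩ := hpred
  intro p hp q hq
  rcases hW p hp.1 q hq.1 with ⟨r, hrS, hpr, hqr, hlub⟩ | ⟨r, hrS, hrp, hrq, hglb⟩
  · left
    have hr : r ≠ x := by
      rintro rfl
      have hpx : p < r := lt_of_le_of_ne hpr hp.2
      have hqx : q < r := lt_of_le_of_ne hqr hq.2
      have h1 : p ≤ π := hπge p hp.1 hpx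
      have h2 : q ≤ π := hπge q hq.1 hqx
      have : r ≤ π := hlub π hπS h1 h2
      exact absurd (lt_of_le_of_lt this hπx) (lt_irrefl _)
    exact ⟨r, ⟨hrS, hr⟩, hpr, hqr, fun s hs hps hqs => hlub s hs.1 hps hqs⟩
  · by_cases hr : r = x
    · subst hr
      right
      refine ⟨π, ⟨hπS, fun hπx' => absurd (hπx' ▸ hπx) (lt_irrefl _)⟩,
        hπx.le.trans hrp, hπx.le.trans hrq, ?_⟩
      intro s hs hsp hsq
      have hsr : s ≤ r := hglb s hs.1 hsp hsq
      have : s < r := lt_of_le_of_ne hsr hs.2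
      exact hπge s hs.1 this
    · right
      exact ⟨r, ⟨hrS, hr⟩, hrp, hrq, fun s hs hps hqs => hglb s hs.1 hps hqs⟩

/-- Key lemma: a finite woven poset in which no element has a predecessor
has a greatest element. -/
lemma exists_top_of_no_pred {S : Set α} (hfin : S.Finite) (hW : PosetWovenIn S)
    (hne : S.Nonempty) (hnp : ∀ x ∈ S, ¬ HasPredIn S x) :
    ∃ m ∈ S, ∀ y ∈ S, y ≤ m := by
  obtain ⟨m, hmS, hmax⟩ := (by obtain ⟨m, hmS, hm⟩ := hfin.exists_maximalFor id S hne; exact ⟨m, hmS, fun a ha h => le_antisymm h (hm ha h)⟩ : ∃ m ∈ S, ∀ a ∈ S, id m ≤ id a → id m = id a)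
  refine ⟨m, hmS, ?_⟩
  by_contra hcon
  push_neg at hcon
  obtain ⟨y, hyS, hym⟩ := hcon
  -- X = elements not below m
  set X : Set α := {x ∈ S | ¬ x ≤ m} with hX
  have hXfin : X.Finite := hfin.subset (fun a ha => ha.1)
  have hXne : X.Nonempty := ⟨y, hyS, hym⟩
  obtain ⟨x₀, hx₀X, hx₀min⟩ := (by obtain ⟨m, hmS, hm⟩ := hXfin.exists_minimalFor id X hXne; exact ⟨m, hmS, fun a ha h => le_antisymm (hm ha h) h⟩ : ∃ m ∈ X, ∀ a ∈ X, id a ≤ id m → id m = id a)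
  have hx₀S : x₀ ∈ S := hx₀X.1
  have hx₀m : ¬ x₀ ≤ m := hx₀X.2
  -- the pair (x₀, m) has no upper bound, hence has an infimum g
  rcases hW x₀ hx₀S m hmS with ⟨r, hrS, hx₀r, hmr, _⟩ | ⟨g, hgS, hgx₀, hgm, hglb⟩
  · exact hx₀m (le_of_le_of_eq hx₀r (hmax r hrS hmr).symm)
  · -- g is a predecessor of x₀
    refine hnp x₀ hx₀S ⟨g, hgS, lt_of_le_of_ne hgx₀ (fun h => hx₀m (h ▸ hgm)), ?_⟩
    intro u huS hux₀
    have hum : u ≤ m := by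
      by_contra hum
      have huX : u ∈ X := ⟨huS, hum⟩
      have heq : x₀ = u := hx₀min u huX hux₀.le
      exact absurd (heq ▸ hux₀) (lt_irrefl u)
    exact hglb u huS hux₀.le hum

/-- Main removal lemma: every nonempty finite woven poset has an element whose
removal keeps it woven. -/
lemma exists_removable {S : Set α} (hfin : S.Finite) (hW : PosetWovenIn S)
    (hne : S.Nonempty) : ∃ x ∈ S, PosetWovenIn (S \ {x}) := by
  by_cases h : ∃ x ∈ S, HasSuccIn S x ∨ HasPredIn S x
  · obtain ⟨x, hxS, hx⟩ := h
    refine ⟨x, hxS, ?_⟩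
    rcases hx with hs | hp
    · exact wovenIn_diff_of_succ hW hs
    · exact wovenIn_diff_of_pred hW hp
  · push_neg at h
    -- no succ, no pred anywhere. Get a top element.
    have hnp : ∀ x ∈ S, ¬ HasPredIn S x := fun x hx => (h x hx).2
    have hns : ∀ x ∈ S, ¬ HasSuccIn S x := fun x hx => (h x hx).1
    obtain ⟨m, hmS, htop⟩ := exists_top_of_no_pred hfin hW hne hnp
    -- claim S = {m}
    have hSm : S = {m} := by
      by_contra hSne
      have : (S \ {m}).Nonempty := by
        rcases Set.eq_empty_or_nonempty (S \ {m}) with he | hn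
        · exact absurd (by
            apply Set.eq_singleton_iff_unique_mem.mpr
            refine ⟨hmS, fun a haS => ?_⟩
            by_contra ham
            exact absurd ⟨haS, ham⟩ (he ▸ Set.notMem_empty a)) hSne
        · exact hn
      obtain ⟨x, hxX, hxmax⟩ := (by obtain ⟨m, hmS, hm⟩ := (hfin.subset (Set.diff_subset)).exists_maximalFor id (S \ {m}) this; exact ⟨m, hmS, fun a ha h => le_antisymm h (hm ha h)⟩ : ∃ x ∈ S \ {m}, ∀ a ∈ S \ {m}, id x ≤ id a → id x = id a)
      -- x has successor m
      refine hns x hxX.1 ⟨m, hmS, lt_of_le_of_ne (htop x hxX.1) hxX.2, ?_⟩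
      intro u huS hxu
      by_cases hum : u = m
      · exact le_of_eq hum.symm
      · have heq : x = u := hxmax u ⟨huS, hum⟩ hxu.le
        exact absurd (heq ▸ hxu) (lt_irrefl u)
    refine ⟨m, hmS, ?_⟩
    rw [hSm, Set.diff_self]
    exact wovenIn_empty

end Aux

/-- Chain construction by induction on the cardinality. -/
lemma unravel_aux {α : Type*} [PartialOrder α] :
    ∀ (k : ℕ) (S : Set α), S.Finite → S.ncard = k → PosetWovenIn S →
    ∃ c : ℕ → Set α, c 0 = ∅ ∧ c k = S ∧
      (∀ i ≤ k, PosetWovenIn (c i)) ∧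
      (∀ i < k, c i ⊆ c (i + 1) ∧ (c (i + 1) \ c i).ncard = 1) := by
  intro k
  induction k with
  | zero =>
    intro S hfin hcard _
    have hS : S = ∅ := (Set.ncard_eq_zero hfin).mp hcard
    subst hS
    exact ⟨fun _ => ∅, rfl, rfl, fun i _ => wovenIn_empty, fun i hi => absurd hi (Nat.not_lt_zero i)⟩
  | succ k ih =>
    intro S hfin hcard hW
    have hne : S.Nonempty := by
      rw [Set.nonempty_iff_ne_empty]
      intro hS
      rw [hS, Set.ncard_empty] at hcard
      exact Nat.succ_ne_zero k hcard.symm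
    obtain ⟨x, hxS, hWx⟩ := exists_removable hfin hW hne
    have hfin' : (S \ {x}).Finite := hfin.subset Set.diff_subset
    have hcard' : (S \ {x}).ncard = k := by
      have := Set.ncard_diff_singleton_add_one hxS hfin
      omega
    obtain ⟨c, hc0, hck, hcw, hcs⟩ := ih (S \ {x}) hfin' hcard' hWx
    refine ⟨fun i => if i = k + 1 then S else c i,
      by show (if (0 : ℕ) = k + 1 then S else c 0) = ∅
         rw [if_neg (show ¬ (0 : ℕ) = k + 1 by omega)]; exact hc0,
      by show (if k + 1 = k + 1 then S else c (k + 1)) = S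
         rw [if_pos rfl], ?_, ?_⟩
    · intro i hi
      show PosetWovenIn (if i = k + 1 then S else c i)
      by_cases hik : i = k + 1
      · rw [if_pos hik]; exact hW
      · rw [if_neg hik]; exact hcw i (by omega)
    · intro i hi
      show (if i = k + 1 then S else c i) ⊆ (if i + 1 = k + 1 then S else c (i + 1)) ∧
        ((if i + 1 = k + 1 then S else c (i + 1)) \ (if i = k + 1 then S else c i)).ncard = 1
      by_cases hik : i + 1 = k + 1
      · have hik' : i = k := by omega
        rw [if_neg (show ¬ i = k + 1 by omega), if_pos hik, hik', hck]
        constructor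
        · exact Set.diff_subset
        · have hd : S \ (S \ {x}) = {x} := by
            rw [Set.diff_diff_right_self]
            exact Set.inter_eq_self_of_subset_right (Set.singleton_subset_iff.mpr hxS)
          rw [hd, Set.ncard_singleton]
      · rw [if_neg (show ¬ i = k + 1 by omega), if_neg hik]
        exact hcs i (by omega)

/-- Every finite woven poset `P` can be unravelled: there is a chain
`∅ = P₀ ⊆ P₁ ⊆ ⋯ ⊆ Pₙ = P` of subposets, each woven with the induced order,
each step adding exactly one element. -/
theorem stmt_12 {P : Type*} [PartialOrder P] [Fintype P]
    (h : PosetWovenIn (Set.univ : Set P)) :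
    ∃ (n : ℕ) (c : ℕ → Set P),
      c 0 = ∅ ∧ c n = Set.univ ∧
      (∀ i ≤ n, PosetWovenIn (c i)) ∧
      (∀ i < n, c i ⊆ c (i + 1) ∧ (c (i + 1) \ c i).ncard = 1) := by
  obtain ⟨c, hc0, hcn, hcw, hcs⟩ := unravel_aux (Set.univ : Set P).ncard Set.univ
    (Set.finite_univ) rfl h
  exact ⟨(Set.univ : Set P).ncard, c, hc0, hcn, hcw, hcs⟩
end

section
/- Let P be a finite woven poset and let p ∈ P be an element with precisely one lower cover (or, dually, precisely one upper cover) in P. Then the induced subposet P ∖ {p} is again a woven poset. -/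
/-- If `P` is a finite woven poset and `p ∈ P` has precisely one lower cover
or precisely one upper cover, then the induced subposet `P ∖ {p}` is again
woven. -/
theorem stmt_13 {P : Type*} [PartialOrder P] [Fintype P]
    (h : PosetWovenIn (Set.univ : Set P)) (p : P)
    (hcov : (∃! q : P, q ⋖ p) ∨ (∃! q : P, p ⋖ q)) :
    PosetWovenIn ({p}ᶜ : Set P) := by
  intro a ha b hb
  simp only [Set.mem_compl_iff, Set.mem_singleton_iff] at ha hb
  rcases hcov with ⟨q₀, hq₀, huniq⟩ | ⟨q₀, hq₀, huniq⟩
  · -- unique lower cover q₀ of p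
    rcases h a trivial b trivial with ⟨r, -, har, hbr, hmin⟩ | ⟨r, -, hra, hrb, hmax⟩
    · -- supremum r; show r ≠ p
      have hrp : r ≠ p := by
        rintro rfl
        have hap : a < r := lt_of_le_of_ne har ha
        have hbp : b < r := lt_of_le_of_ne hbr hb
        obtain ⟨x, hax, hxp⟩ := exists_le_covBy_of_lt hap
        obtain ⟨y, hby, hyp⟩ := exists_le_covBy_of_lt hbp
        have hx : x = q₀ := huniq x hxp
        have hy : y = q₀ := huniq y hyp
        have : r ≤ q₀ := hmin q₀ trivial (hx ▸ hax) (hy ▸ hby)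
        exact absurd this hq₀.lt.not_ge
      exact Or.inl ⟨r, hrp, har, hbr, fun s _ hs1 hs2 => hmin s trivial hs1 hs2⟩
    · by_cases hrp : r = p
      · subst hrp
        refine Or.inr ⟨q₀, hq₀.lt.ne, hq₀.le.trans hra, hq₀.le.trans hrb, ?_⟩
        intro s hs hsa hsb
        have hsr : s < r := lt_of_le_of_ne (hmax s trivial hsa hsb) hs
        obtain ⟨x, hsx, hxr⟩ := exists_le_covBy_of_lt hsr
        exact (huniq x hxr) ▸ hsx
      · exact Or.inr ⟨r, hrp, hra, hrb, fun s _ hs1 hs2 => hmax s trivial hs1 hs2⟩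
  · -- unique upper cover q₀ of p
    rcases h a trivial b trivial with ⟨r, -, har, hbr, hmin⟩ | ⟨r, -, hra, hrb, hmax⟩
    · by_cases hrp : r = p
      · subst hrp
        refine Or.inl ⟨q₀, hq₀.lt.ne', har.trans hq₀.le, hbr.trans hq₀.le, ?_⟩
        intro s hs hsa hsb
        have hrs : r < s := lt_of_le_of_ne (hmin s trivial hsa hsb) (Ne.symm hs)
        obtain ⟨x, hrx, hxs⟩ := exists_covBy_le_of_lt hrs
        exact (huniq x hrx) ▸ hxs
      · exact Or.inl ⟨r, hrp, har, hbr, fun s _ hs1 hs2 => hmin s trivial hs1 hs2⟩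
    · have hrp : r ≠ p := by
        rintro rfl
        have hpa : r < a := lt_of_le_of_ne hra (Ne.symm ha)
        have hpb : r < b := lt_of_le_of_ne hrb (Ne.symm hb)
        obtain ⟨x, hrx, hxa⟩ := exists_covBy_le_of_lt hpa
        obtain ⟨y, hry, hyb⟩ := exists_covBy_le_of_lt hpb
        have : q₀ ≤ r := hmax q₀ trivial ((huniq x hrx) ▸ hxa) ((huniq y hry) ▸ hyb)
        exact absurd this hq₀.lt.not_ge
      exact Or.inr ⟨r, hrp, hra, hrb, fun s _ hs1 hs2 => hmax s trivial hs1 hs2⟩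
end

section
/- Let P be a finite nonempty woven poset and let M be the set of maximal elements of P. Then every nonempty subset M′ ⊆ M has an infimum in P, i.e. there exists q ∈ P with q ≤ m for all m ∈ M′ and such that every s ∈ P with s ≤ m for all m ∈ M′ satisfies s ≤ q. -/
theorem stmt_14_aux {P : Type*} [PartialOrder P]
    (h : PosetWovenIn (Set.univ : Set P))
    (T : Finset P) (hne : T.Nonempty)
    (hmax : ∀ m ∈ T, ∀ x : P, m ≤ x → x = m) :
    ∃ q : P, (∀ m ∈ T, q ≤ m) ∧ ∀ s : P, (∀ m ∈ T, s ≤ m) → s ≤ q := by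
  induction hne using Finset.Nonempty.cons_induction with
  | singleton a =>
    exact ⟨a, by simp, by simp⟩
  | cons a T ha hT ih =>
    obtain ⟨q, hq1, hq2⟩ := ih (fun m hm => hmax m (Finset.mem_cons_of_mem hm))
    have hamax := hmax a (Finset.mem_cons_self a T)
    rcases h a (Set.mem_univ a) q (Set.mem_univ q) with
      ⟨r, -, har, hqr, -⟩ | ⟨r, -, hra, hrq, hr⟩
    · have : r = a := hamax r har
      refine ⟨q, ?_, ?_⟩
      · intro m hm
        rcases Finset.mem_cons.mp hm with rfl | hm
        · exact this ▸ hqr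
        · exact hq1 m hm
      · intro s hs
        exact hq2 s (fun m hm => hs m (Finset.mem_cons_of_mem hm))
    · refine ⟨r, ?_, ?_⟩
      · intro m hm
        rcases Finset.mem_cons.mp hm with rfl | hm
        · exact hra
        · exact hrq.trans (hq1 m hm)
      · intro s hs
        exact hr s (Set.mem_univ s) (hs a (Finset.mem_cons_self a T))
          (hq2 s (fun m hm => hs m (Finset.mem_cons_of_mem hm)))

/-- In a finite nonempty woven poset `P`, every nonempty set `M'` of maximal
elements has an infimum in `P`. -/
theorem stmt_14 {P : Type*} [PartialOrder P] [Fintype P] [Nonempty P]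
    (h : PosetWovenIn (Set.univ : Set P))
    (M' : Set P) (hne : M'.Nonempty)
    (hmax : ∀ m ∈ M', ∀ x : P, m ≤ x → x = m) :
    ∃ q : P, (∀ m ∈ M', q ≤ m) ∧ ∀ s : P, (∀ m ∈ M', s ≤ m) → s ≤ q := by
  haveI : Fintype ↑M' := Set.Finite.fintype (Set.toFinite M')
  obtain ⟨q, hq1, hq2⟩ := stmt_14_aux h M'.toFinset
    (by rwa [Set.toFinset_nonempty]) (by simpa using hmax)
  exact ⟨q, fun m hm => hq1 m (Set.mem_toFinset.mpr hm),
    fun s hs => hq2 s (fun m hm => hs m (Set.mem_toFinset.mp hm))⟩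
end

section
/- Let P be a finite woven poset, let M be the set of maximal elements of P, and for M′ ⊆ M let d(M′) = {x ∈ P : for every m ∈ M, x ≤ m if and only if m ∈ M′}. If M′ ⊆ M is subset-minimal with the property that d(M′) contains at least two elements, then there exists x ∈ d(M′) whose unique upper cover in P is the infimum of M′ in P (which exists). -/
/-- Let `P` be a finite woven poset, `M` its set of maximal elements, and for
`N ⊆ M` let `d N = {x | ∀ m ∈ M, x ≤ m ↔ m ∈ N}`. If `M' ⊆ M` is
subset-minimal with `|d M'| ≥ 2`, then there is `x ∈ d M'` whose unique upper
cover is the infimum of `M'` in `P` (which exists). -/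
theorem stmt_15 {P : Type*} [PartialOrder P] [Fintype P]
    (hw : PosetWovenIn (Set.univ : Set P))
    (M : Set P) (hM : M = {m : P | ∀ x : P, m ≤ x → x = m})
    (d : Set P → Set P)
    (hd : ∀ N : Set P, d N = {x : P | ∀ m ∈ M, (x ≤ m ↔ m ∈ N)})
    (M' : Set P) (hM'M : M' ⊆ M)
    (h2 : 2 ≤ (d M').ncard)
    (hmin : ∀ M'' : Set P, M'' ⊂ M' → (d M'').ncard < 2) :
    ∃ x ∈ d M', ∃ q : P,
      ((∀ m ∈ M', q ≤ m) ∧ ∀ s : P, (∀ m ∈ M', s ≤ m) → s ≤ q) ∧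
      (∀ y : P, x ⋖ y ↔ y = q) := by
  classical
  have hdmem : ∀ (N : Set P) (x : P), x ∈ d N ↔ ∀ m ∈ M, (x ≤ m ↔ m ∈ N) := by
    intro N x; rw [hd N]; exact Iff.rfl
  have hmaxM : ∀ m ∈ M, ∀ x : P, m ≤ x → x = m := by
    rw [hM]; exact fun m hm => hm
  -- every element lies below some maximal element
  have hex_max : ∀ x : P, ∃ m ∈ M, x ≤ m := by
    intro x
    obtain ⟨m, hm, hmax⟩ := Set.Finite.exists_maximalFor id {y : P | x ≤ y}
      (Set.toFinite _) ⟨x, le_rfl⟩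
    refine ⟨m, ?_, hm⟩
    rw [hM]
    exact fun z hz => le_antisymm (hmax (le_trans hm hz) hz) hz
  -- fibers over proper subsets of M' are subsingletons
  have hsub : ∀ N : Set P, N ⊂ M' → ∀ c1 ∈ d N, ∀ c2 ∈ d N, c1 = c2 := by
    intro N hN c1 h1 c2 h2'
    by_contra hne
    have hpair : ({c1, c2} : Set P) ⊆ d N := by
      intro z hz; rcases hz with rfl | rfl
      · exact h1
      · exact h2'
    have hcard : 2 ≤ (d N).ncard := by
      have := Set.ncard_le_ncard hpair (Set.toFinite _)
      rwa [Set.ncard_pair hne] at this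
    exact absurd hcard (by have := hmin N hN; omega)
  -- helpers: existence of minimal/maximal elements below/above a given element
  have hminbelow : ∀ (C : Set P), ∀ c ∈ C, ∃ u ∈ C, u ≤ c ∧ ∀ v ∈ C, v ≤ u → v = u := by
    intro C c hc
    obtain ⟨u, hu, hmin'⟩ := Set.Finite.exists_minimalFor id {v | v ∈ C ∧ v ≤ c}
      (Set.toFinite _) ⟨c, hc, le_rfl⟩
    exact ⟨u, hu.1, hu.2, fun v hv hvu => le_antisymm hvu (hmin' ⟨hv, le_trans hvu hu.2⟩ hvu)⟩
  have hmaxabove : ∀ (C : Set P), ∀ c ∈ C, ∃ u ∈ C, c ≤ u ∧ ∀ v ∈ C, u ≤ v → v = u := by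
    intro C c hc
    obtain ⟨u, hu, hmax'⟩ := Set.Finite.exists_maximalFor id {v | v ∈ C ∧ c ≤ v}
      (Set.toFinite _) ⟨c, hc, le_rfl⟩
    exact ⟨u, hu.1, hu.2, fun v hv huv => le_antisymm (hmax' ⟨hv, le_trans hu.2 huv⟩ huv) huv⟩
  -- Key Lemma: if a ∈ d N (N ⊆ M') and b is a lower bound of N, then a and b
  -- have a common upper bound inside d N.
  have hL1 : ∀ N : Set P, N ⊆ M' → ∀ a b : P, a ∈ d N → (∀ m ∈ N, b ≤ m) →
      ∃ c ∈ d N, a ≤ c ∧ b ≤ c := by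
    intro N hNM' a b haN hbN
    have haN' := (hdmem N a).mp haN
    have haM : ∀ m ∈ N, a ≤ m := fun m hm => (haN' m (hM'M (hNM' hm))).mpr hm
    by_contra hcon
    push_neg at hcon
    set C : Set P := {z : P | a ≤ z ∧ b ≤ z} with hCdef
    have hmemC : ∀ z : P, z ∈ C ↔ a ≤ z ∧ b ≤ z := fun z => Iff.rfl
    have hNC : ∀ m ∈ N, m ∈ C := fun m hm => (hmemC m).mpr ⟨haM m hm, hbN m hm⟩
    have hCup : ∀ c ∈ C, ∀ m ∈ M, c ≤ m → m ∈ N := fun c hc m hm hcm =>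
      (haN' m hm).mp (le_trans ((hmemC c).mp hc).1 hcm)
    have hnotin : ∀ c ∈ C, ∃ m ∈ N, ¬ c ≤ m := by
      intro c hc
      by_contra h; push_neg at h
      have hcd : c ∈ d N := (hdmem N c).mpr
        (fun m hm => ⟨fun hcm => hCup c hc m hm hcm, fun hmN => h m hmN⟩)
      exact hcon c hcd ((hmemC c).mp hc).1 ((hmemC c).mp hc).2
    have hinj : ∀ c1 ∈ C, ∀ c2 ∈ C, (∀ m ∈ M, c1 ≤ m ↔ c2 ≤ m) → c1 = c2 := by
      intro c1 hc1 c2 hc2 hUU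
      have h1 : c1 ∈ d {m | m ∈ M ∧ c1 ≤ m} := (hdmem _ _).mpr
        (fun m hm => ⟨fun h => ⟨hm, h⟩, fun h => h.2⟩)
      have h2' : c2 ∈ d {m | m ∈ M ∧ c1 ≤ m} := (hdmem _ _).mpr
        (fun m hm => ⟨fun h => ⟨hm, (hUU m hm).mpr h⟩, fun h => (hUU m hm).mp h.2⟩)
      have hN'sub : {m | m ∈ M ∧ c1 ≤ m} ⊂ M' := by
        rw [Set.ssubset_iff_subset_ne]
        constructor
        · intro m hm; exact hNM' (hCup c1 hc1 m hm.1 hm.2)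
        · intro hEq
          obtain ⟨m, hmN, hmnot⟩ := hnotin c1 hc1
          have : m ∈ {m | m ∈ M ∧ c1 ≤ m} := hEq ▸ (hNM' hmN)
          exact hmnot this.2
      exact hsub _ hN'sub c1 h1 c2 h2'
    have hkey : ∀ u ∈ C, (∀ v ∈ C, v ≤ u → v = u) →
        ∀ v ∈ C, (∀ w ∈ C, w ≤ v → w = v) → ∀ m ∈ M, u ≤ m → v ≤ m := by
      intro u huC humin v hvC hvmin m hmM hum
      by_contra hvm
      have hmN : m ∈ N := hCup u huC m hmM hum
      rcases hw v (Set.mem_univ v) m (Set.mem_univ m) with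
        ⟨r, -, hvr, hmr, -⟩ | ⟨t, -, htv, htm, hgt⟩
      · exact hvm ((hmaxM m hmM r hmr) ▸ hvr)
      · have htC : t ∈ C := (hmemC t).mpr
          ⟨hgt a (Set.mem_univ a) ((hmemC v).mp hvC).1 (haM m hmN),
           hgt b (Set.mem_univ b) ((hmemC v).mp hvC).2 (hbN m hmN)⟩
        exact hvm ((hvmin t htC htv) ▸ htm)
    have huniq : ∀ u ∈ C, (∀ v ∈ C, v ≤ u → v = u) →
        ∀ v ∈ C, (∀ w ∈ C, w ≤ v → w = v) → u = v := by
      intro u huC humin v hvC hvmin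
      exact hinj u huC v hvC (fun m hm =>
        ⟨fun h => hkey u huC humin v hvC hvmin m hm h,
         fun h => hkey v hvC hvmin u huC humin m hm h⟩)
    obtain ⟨m0, hm0M, ham0⟩ := hex_max a
    have hm0N : m0 ∈ N := (haN' m0 hm0M).mp ham0
    obtain ⟨u0, hu0C, -, hu0min⟩ := hminbelow C m0 (hNC m0 hm0N)
    have hbot : ∀ c ∈ C, u0 ≤ c := by
      intro c hc
      obtain ⟨u, huC, huc, humin⟩ := hminbelow C c hc
      exact (huniq u0 hu0C hu0min u huC humin) ▸ huc
    have hu0d : u0 ∈ d N := (hdmem N u0).mpr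
      (fun m hm => ⟨fun h => hCup u0 hu0C m hm h, fun h => hbot m (hNC m h)⟩)
    exact hcon u0 hu0d ((hmemC u0).mp hu0C).1 ((hmemC u0).mp hu0C).2
  -- the maximum q of d M'
  have hDne : (d M').Nonempty := Set.nonempty_of_ncard_ne_zero (by omega)
  obtain ⟨x0, hx0⟩ := hDne
  obtain ⟨q, hqD, -, hqmax⟩ := hmaxabove (d M') x0 hx0
  have hqM' : ∀ m ∈ M', q ≤ m := fun m hm => ((hdmem M' q).mp hqD m (hM'M hm)).mpr hm
  have hqtop : ∀ z ∈ d M', z ≤ q := by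
    intro z hz
    obtain ⟨c, hcD, hqc, hzc⟩ := hL1 M' (fun _ h => h) q z hqD
      (fun m hm => ((hdmem M' z).mp hz m (hM'M hm)).mpr hm)
    exact le_trans hzc (le_of_eq (hqmax c hcD hqc))
  have hqinf : ∀ s : P, (∀ m ∈ M', s ≤ m) → s ≤ q := by
    intro s hs
    obtain ⟨c, hcD, hqc, hsc⟩ := hL1 M' (fun _ h => h) q s hqD hs
    exact le_trans hsc (le_of_eq (hqmax c hcD hqc))
  -- pick x maximal in d M' \ {q}
  obtain ⟨y0, hy0D, hy0q⟩ := Set.exists_ne_of_one_lt_ncard (by omega : 1 < (d M').ncard) q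
  obtain ⟨x, hxmem, -, hxmax⟩ := hmaxabove {z | z ∈ d M' ∧ z ≠ q} y0 ⟨hy0D, hy0q⟩
  have hxD : x ∈ d M' := hxmem.1
  have hxq : x ≠ q := hxmem.2
  have hxltq : x < q := lt_of_le_of_ne (hqtop x hxD) hxq
  refine ⟨x, hxD, q, ⟨⟨hqM', hqinf⟩, ?_⟩⟩
  intro y
  constructor
  · intro hcov
    by_contra hyq
    have hxy : x < y := hcov.1
    have hyup : ∀ m ∈ M, y ≤ m → m ∈ M' := fun m hm hym =>
      ((hdmem M' x).mp hxD m hm).mp (le_trans hxy.le hym)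
    by_cases hyD : ∀ m ∈ M', y ≤ m
    · have hyd : y ∈ d M' := (hdmem M' y).mpr
        (fun m hm => ⟨fun h => hyup m hm h, fun h => hyD m h⟩)
      have : y = x := hxmax y ⟨hyd, hyq⟩ hxy.le
      exact absurd this (ne_of_gt hxy)
    · push_neg at hyD
      have hNsub : {m | m ∈ M ∧ y ≤ m} ⊆ M' := fun m hm => hyup m hm.1 hm.2
      have hyN : y ∈ d {m | m ∈ M ∧ y ≤ m} := (hdmem _ _).mpr
        (fun m hm => ⟨fun h => ⟨hm, h⟩, fun h => h.2⟩)
      obtain ⟨c, hcN, hyc, hqc⟩ := hL1 {m | m ∈ M ∧ y ≤ m} hNsub y q hyN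
        (fun m hm => hqM' m (hNsub hm))
      have hNss : {m | m ∈ M ∧ y ≤ m} ⊂ M' := by
        rw [Set.ssubset_iff_subset_ne]
        refine ⟨hNsub, ?_⟩
        intro hEq
        obtain ⟨m, hmM', hnym⟩ := hyD
        have : m ∈ {m | m ∈ M ∧ y ≤ m} := hEq ▸ hmM'
        exact hnym this.2
      have hcy : c = y := hsub _ hNss c hcN y hyN
      have hqy : q < y := lt_of_le_of_ne (hcy ▸ hqc) (fun h => hyq h.symm)
      exact hcov.2 hxltq hqy
  · rintro rfl
    refine ⟨hxltq, ?_⟩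
    intro z hxz hzq
    have hzD : z ∈ d M' := (hdmem M' z).mpr
      (fun m hm => ⟨fun h => ((hdmem M' x).mp hxD m hm).mp (le_trans hxz.le h),
                    fun h => le_trans hzq.le (hqM' m h)⟩)
    have : z = x := hxmax z ⟨hzD, ne_of_lt hzq⟩ hxz.le
    exact absurd this (ne_of_gt hxz)
end
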